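/- (Brin) For every element f of Thompson's group V there is a positive integer N = n(f) bounding the size of all finite orbits of f: for every x in [0,1), if the forward orbit {f^[n](x) : n ≥ 0} is finite, then it has at most N elements; equivalently, every periodic point of f has least period at most N. -/

import Mathlib

open Set

/-- A real number is a dyadic rational if it has the form `a / 2 ^ b`. -/
def IsDyadic (x : ℝ) : Prop := ∃ a : ℤ, ∃ b : ℕ, x = (a : ℝ) / 2 ^ b

/-- A bijection of `[0,1)` belongs to Thompson's group `V` iff there are two finite
dyadic partitions `0 = t 0 < ⋯ < t m = 1` and `0 = u 0 < ⋯ < u m = 1` of `[0,1)` and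
a permutation `σ` of the pieces such that `f` maps each half-open interval
`[t i, t (i+1))` of the first partition affinely and increasingly onto the half-open
interval `[u (σ i), u (σ i + 1))` of the second partition, with slope an integer
power of `2`.  (In particular every such `f` is right-continuous with finitely many
discontinuities and breakpoints, all of them and their images dyadic.) -/
def InThompsonV (f : Equiv.Perm (Ico (0:ℝ) 1)) : Prop :=
  ∃ m : ℕ, ∃ t u : Fin (m + 1) → ℝ,
    StrictMono t ∧ t 0 = 0 ∧ t (Fin.last m) = 1 ∧ (∀ i, IsDyadic (t i)) ∧
    StrictMono u ∧ u 0 = 0 ∧ u (Fin.last m) = 1 ∧ (∀ i, IsDyadic (u i)) ∧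
    ∃ σ : Equiv.Perm (Fin m), ∀ i : Fin m, ∃ k : ℤ,
      (2 : ℝ) ^ k * (t i.succ - t i.castSucc) = u (σ i).succ - u (σ i).castSucc ∧
      ∀ x : Ico (0:ℝ) 1, (x : ℝ) ∈ Ico (t i.castSucc) (t i.succ) →
        (f x : ℝ) = (2 : ℝ) ^ k * ((x : ℝ) - t i.castSucc) + u (σ i).castSucc

noncomputable section BrinProof

set_option maxHeartbeats 1000000

namespace BrinV

abbrev UI : Type := ↥(Set.Ico (0:ℝ) 1)

/-- membership in the standard dyadic interval `[a 2^{-n}, (a+1) 2^{-n})` -/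
def dmem (x : ℝ) (n a : ℤ) : Prop :=
  (a:ℝ) * 2^(-n) ≤ x ∧ x < ((a:ℝ)+1) * 2^(-n)

lemma tzpos (n : ℤ) : (0:ℝ) < 2^n := zpow_pos (by norm_num) n

lemma tzne (n : ℤ) : (2:ℝ)^n ≠ 0 := (tzpos n).ne'

lemma tz_inj {m n : ℤ} (h : (2:ℝ)^m = 2^n) : m = n :=
  zpow_right_injective₀ (by norm_num) (by norm_num) h

lemma dmem_iff {x : ℝ} {n a : ℤ} : dmem x n a ↔ ((a:ℝ) ≤ x * 2^n ∧ x * 2^n < (a:ℝ)+1) := by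
  have h := tzpos n
  constructor
  · rintro ⟨h1, h2⟩
    constructor
    · have := mul_le_mul_of_nonneg_right h1 h.le
      rwa [mul_assoc, ← zpow_add₀ (two_ne_zero) (-n) n, neg_add_cancel, zpow_zero, mul_one] at this
    · have := mul_lt_mul_of_pos_right h2 h
      rwa [mul_assoc, ← zpow_add₀ (two_ne_zero) (-n) n, neg_add_cancel, zpow_zero, mul_one] at this
  · rintro ⟨h1, h2⟩
    have hp := tzpos (-n)
    constructor
    · have := mul_le_mul_of_nonneg_right h1 hp.le
      rwa [mul_assoc, ← zpow_add₀ (two_ne_zero) n (-n), add_neg_cancel, zpow_zero, mul_one] at this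
    · have := mul_lt_mul_of_pos_right h2 hp
      rwa [mul_assoc, ← zpow_add₀ (two_ne_zero) n (-n), add_neg_cancel, zpow_zero, mul_one] at this

lemma dmem_floor {x : ℝ} (n : ℤ) : dmem x n ⌊x * 2^n⌋ := by
  rw [dmem_iff]
  exact ⟨Int.floor_le _, by push_cast; exact Int.lt_floor_add_one _⟩

lemma dmem_eq_floor {x : ℝ} {n a : ℤ} (h : dmem x n a) : a = ⌊x * 2^n⌋ := by
  rw [dmem_iff] at h
  exact (Int.floor_eq_iff.2 ⟨h.1, by push_cast; exact h.2⟩).symm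

lemma dmem_unique {x : ℝ} {n a a' : ℤ} (h : dmem x n a) (h' : dmem x n a') : a = a' :=
  (dmem_eq_floor h).trans (dmem_eq_floor h').symm

lemma dmem_nonneg {x : ℝ} {n a : ℤ} (hx : 0 ≤ x) (h : dmem x n a) : 0 ≤ a := by
  rw [dmem_eq_floor h]
  exact Int.floor_nonneg.2 (by positivity)

lemma dmem_lt {x : ℝ} {n a : ℤ} (hx : x < 1) (h : dmem x n a) : (a:ℝ) < 2^n := by
  rw [dmem_iff] at h
  have h2 : x * 2^n < 2^n := by
    have := tzpos n
    nlinarith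
  exact lt_of_le_of_lt h.1 h2

lemma two_zpow_eq_cast {n : ℤ} (hn : 0 ≤ n) : (2:ℝ)^n = ((2 ^ n.toNat : ℤ) : ℝ) := by
  have h1 : ((2 ^ n.toNat : ℤ) : ℝ) = (2:ℝ) ^ n.toNat := by push_cast; ring
  rw [h1, ← zpow_natCast (2:ℝ) n.toNat, Int.toNat_of_nonneg hn]

/-- convert the real bound to an integer bound when the scale is nonnegative -/
lemma int_lt_two_zpow {a n : ℤ} (hn : 0 ≤ n) (h : (a:ℝ) < 2^n) :
    a < 2 ^ n.toNat := by
  rw [two_zpow_eq_cast hn] at h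
  exact_mod_cast h

lemma dmem_nested {n n' a a' : ℤ} (h : n ≤ n') {x : ℝ}
    (hx : dmem x n a) (hx' : dmem x n' a') :
    ∀ {z : ℝ}, dmem z n' a' → dmem z n a := by
  set c : ℤ := 2 ^ (n' - n).toNat with hcdef
  have hc : (c:ℝ) = 2 ^ (n' - n) := (two_zpow_eq_cast (by omega)).symm
  have hsplit : (2:ℝ)^n' = 2^n * (c:ℝ) := by
    rw [hc, ← zpow_add₀ (two_ne_zero) n (n' - n)]
    ring_nf
  have h1 := dmem_iff.1 hx
  have h2 := dmem_iff.1 hx'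
  have hcpos : (0:ℝ) < c := by rw [hc]; exact tzpos _
  -- integer inequalities
  have k1 : a * c ≤ a' := by
    have : (a:ℝ) * c < (a':ℝ) + 1 := by
      calc (a:ℝ) * c ≤ (x * 2^n) * c := by nlinarith [h1.1]
        _ = x * 2^n' := by rw [hsplit]; ring
        _ < (a':ℝ) + 1 := h2.2
    exact_mod_cast Int.lt_add_one_iff.1 (by exact_mod_cast this)
  have k2 : a' + 1 ≤ (a + 1) * c := by
    have : (a':ℝ) < ((a:ℝ) + 1) * c := by
      calc (a':ℝ) ≤ x * 2^n' := h2.1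
        _ = (x * 2^n) * c := by rw [hsplit]; ring
        _ < ((a:ℝ)+1) * c := by nlinarith [h1.2]
    exact_mod_cast Int.add_one_le_iff.2 (by exact_mod_cast this)
  intro z hz
  have h3 := dmem_iff.1 hz
  rw [dmem_iff]
  have k1r : (a:ℝ) * c ≤ (a':ℝ) := by exact_mod_cast k1
  have k2r : (a':ℝ) + 1 ≤ ((a:ℝ) + 1) * c := by exact_mod_cast k2
  have hz' : (a:ℝ) * c ≤ z * 2^n' ∧ z * 2^n' < ((a:ℝ)+1) * c := by
    constructor
    · linarith [h3.1]
    · linarith [h3.2]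
  rw [hsplit] at hz'
  constructor
  · nlinarith [hz'.1]
  · nlinarith [hz'.2]

/-- points of a standard dyadic interval with index in range lie in `[0,1)` -/
lemma dmem_sub_UI {n a : ℤ} (hn : 0 ≤ n) (ha : 0 ≤ a) (ha' : (a:ℝ) < 2^n) {z : ℝ}
    (hz : dmem z n a) : 0 ≤ z ∧ z < 1 := by
  obtain ⟨h1, h2⟩ := hz
  have hp := tzpos (-n)
  have hq := tzpos n
  constructor
  · have : (0:ℝ) ≤ (a:ℝ) * 2^(-n) := by positivity
    linarith
  · have hint : a + 1 ≤ 2 ^ n.toNat := Int.add_one_le_iff.2 (int_lt_two_zpow hn ha')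
    have hc : ((a:ℝ) + 1) ≤ 2^n := by
      rw [two_zpow_eq_cast hn]
      exact_mod_cast hint
    have : ((a:ℝ)+1) * 2^(-n) ≤ 2^n * 2^(-n) := by nlinarith
    rw [← zpow_add₀ (two_ne_zero) n (-n), add_neg_cancel, zpow_zero] at this
    linarith

lemma dmem_left {n a : ℤ} : dmem ((a:ℝ) * 2^(-n)) n a := by
  refine ⟨le_refl _, ?_⟩
  have := tzpos (-n)
  nlinarith

lemma dmem_mid {n a : ℤ} : dmem ((a:ℝ) * 2^(-n) + 2^(-(n+1))) n a := by
  have hh : (2:ℝ)^(-(n+1)) = 2^(-n) / 2 := by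
    rw [neg_add, zpow_add₀ (two_ne_zero : (2:ℝ) ≠ 0) (-n) (-1)]
    norm_num
    ring
  constructor
  · have := tzpos (-(n+1)); linarith
  · have := tzpos (-n); rw [hh]; nlinarith

/-- `g` maps `[a2^{-n}, (a+1)2^{-n})` into `[b2^{-s}, (b+1)2^{-s})` affinely,
increasingly, with slope `2^{n-s}`. -/
def AffOn (g : Equiv.Perm (Set.Ico (0:ℝ) 1)) (n a s b : ℤ) : Prop :=
  ∀ x : UI, dmem (x:ℝ) n a →
    ((g x : ℝ)) = (b:ℝ) * 2^(-s) + 2^(n-s) * ((x:ℝ) - (a:ℝ) * 2^(-n))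

lemma AffOn.maps {g : Equiv.Perm (Set.Ico (0:ℝ) 1)} {n a s b : ℤ}
    (hA : AffOn g n a s b) {x : UI} (hx : dmem (x:ℝ) n a) : dmem ((g x : ℝ)) s b := by
  have h := hA x hx
  obtain ⟨h1, h2⟩ := hx
  have hs := tzpos (n - s)
  have hns : (2:ℝ)^(n-s) * 2^(-n) = 2^(-s) := by
    rw [← zpow_add₀ (two_ne_zero : (2:ℝ) ≠ 0)]; ring_nf
  constructor
  · have h0 : (0:ℝ) ≤ 2^(n-s) * ((x:ℝ) - (a:ℝ) * 2^(-n)) := by nlinarith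
    rw [h]; linarith
  · have h0 : 2^(n-s) * ((x:ℝ) - (a:ℝ) * 2^(-n)) < 2^(n-s) * 2^(-n) := by nlinarith
    rw [hns] at h0
    rw [h]; ring_nf; ring_nf at h0 ⊢; linarith

/-- two affine formulas on nested standard intervals have equal slope exponents -/
lemma AffOn.slope_eq {g : Equiv.Perm (Set.Ico (0:ℝ) 1)} {n a s b n' a' s' b' : ℤ}
    (hA : AffOn g n a s b) (hA' : AffOn g n' a' s' b')
    (hn' : 0 ≤ n') (ha' : 0 ≤ a') (ha'2 : (a':ℝ) < 2^n')
    (hsub : ∀ z : ℝ, dmem z n' a' → dmem z n a) :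
    n - s = n' - s' := by
  have m1 : dmem ((a':ℝ) * 2^(-n')) n' a' := dmem_left
  have m2 : dmem ((a':ℝ) * 2^(-n') + 2^(-(n'+1))) n' a' := dmem_mid
  have u1 := dmem_sub_UI hn' ha' ha'2 m1
  have u2 := dmem_sub_UI hn' ha' ha'2 m2
  set x1 : UI := ⟨(a':ℝ) * 2^(-n'), Set.mem_Ico.2 u1⟩
  set x2 : UI := ⟨(a':ℝ) * 2^(-n') + 2^(-(n'+1)), Set.mem_Ico.2 u2⟩
  have e1 := hA x1 (hsub _ m1)
  have e2 := hA x2 (hsub _ m2)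
  have e1' := hA' x1 m1
  have e2' := hA' x2 m2
  have hdiff : (2:ℝ)^(n-s) * 2^(-(n'+1)) = 2^(n'-s') * 2^(-(n'+1)) := by
    have hx1 : ((x1:ℝ)) = (a':ℝ) * 2^(-n') := rfl
    have hx2 : ((x2:ℝ)) = (a':ℝ) * 2^(-n') + 2^(-(n'+1)) := rfl
    simp only [hx1, hx2] at e1 e2 e1' e2'
    have d1 : ((g x2 : ℝ)) - ((g x1 : ℝ)) = 2^(n-s) * 2^(-(n'+1)) := by
      rw [e1, e2]; ring
    have d2 : ((g x2 : ℝ)) - ((g x1 : ℝ)) = 2^(n'-s') * 2^(-(n'+1)) := by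
      rw [e1', e2']; ring
    rw [← d1, ← d2]
  exact tz_inj (mul_right_cancel₀ (tzne (-(n'+1))) hdiff)

/-- two affine formulas on the same standard interval agree entirely -/
lemma AffOn.unique {g : Equiv.Perm (Set.Ico (0:ℝ) 1)} {n a s b s' b' : ℤ}
    (hA : AffOn g n a s b) (hA' : AffOn g n a s' b')
    (hn : 0 ≤ n) (ha : 0 ≤ a) (ha2 : (a:ℝ) < 2^n) :
    s = s' ∧ b = b' := by
  have hslope := AffOn.slope_eq hA hA' hn ha ha2 (fun z hz => hz)
  have hs : s = s' := by omega
  subst hs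
  have m1 : dmem ((a:ℝ) * 2^(-n)) n a := dmem_left
  have u1 := dmem_sub_UI hn ha ha2 m1
  set x1 : UI := ⟨(a:ℝ) * 2^(-n), Set.mem_Ico.2 u1⟩
  have e1 := hA x1 m1
  have e1' := hA' x1 m1
  have hx1 : ((x1:ℝ)) = (a:ℝ) * 2^(-n) := rfl
  rw [hx1] at e1 e1'
  have : (b:ℝ) * 2^(-s) = (b':ℝ) * 2^(-s) := by
    rw [e1] at e1'; ring_nf at e1' ⊢; linarith
  have hb : (b:ℝ) = b' := by
    have hp := tzpos (-s)
    exact mul_right_cancel₀ (tzne (-s)) this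
  exact ⟨rfl, by exact_mod_cast hb⟩

/-- `g` maps every standard dyadic interval of scale at least `M` affinely onto a
standard dyadic interval, with slope exponent at most `M` in absolute value. -/
def Rigid (g : Equiv.Perm (Set.Ico (0:ℝ) 1)) (M : ℕ) : Prop :=
  ∀ n a : ℤ, (M:ℤ) ≤ n → 0 ≤ a → (a:ℝ) < 2^n →
    ∃ s b : ℤ, |n - s| ≤ (M:ℤ) ∧ 0 ≤ b ∧ (b:ℝ) < 2^s ∧ AffOn g n a s b

lemma UI.nonneg (z : UI) : (0:ℝ) ≤ (z:ℝ) := z.2.1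
lemma UI.lt_one (z : UI) : (z:ℝ) < 1 := z.2.2

lemma exists_E {g : Equiv.Perm (Set.Ico (0:ℝ) 1)} {M : ℕ} (hM : 1 ≤ M) (hR : Rigid g M) :
    ∃ E : UI → ℤ, (∀ z, |E z| ≤ (M:ℤ)) ∧
      ∀ z : UI, ∀ n : ℤ, (M:ℤ) ≤ n →
        AffOn g n ⌊(z:ℝ) * 2^n⌋ (n - E z) ⌊((g z : ℝ)) * 2^(n - E z)⌋ := by
  have hMn : (0:ℤ) ≤ (M:ℤ) := by positivity
  have hyp : ∀ z : UI, ∀ n : ℤ, (M:ℤ) ≤ n →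
      ((0:ℤ) ≤ ⌊(z:ℝ) * 2^n⌋ ∧ ((⌊(z:ℝ) * 2^n⌋:ℝ) < 2^n)) := by
    intro z n hn
    exact ⟨dmem_nonneg (UI.nonneg z) (dmem_floor n), dmem_lt (UI.lt_one z) (dmem_floor n)⟩
  refine ⟨fun z => (M:ℤ) - (hR (M:ℤ) ⌊(z:ℝ) * 2^(M:ℤ)⌋ le_rfl
      (hyp z _ le_rfl).1 (hyp z _ le_rfl).2).choose, ?_, ?_⟩
  · intro z
    obtain ⟨b, hb⟩ := (hR (M:ℤ) ⌊(z:ℝ) * 2^(M:ℤ)⌋ le_rfl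
      (hyp z _ le_rfl).1 (hyp z _ le_rfl).2).choose_spec
    simpa using hb.1
  · intro z n hn
    set aM := ⌊(z:ℝ) * 2^(M:ℤ)⌋ with haM
    set an := ⌊(z:ℝ) * 2^n⌋ with han
    obtain ⟨sn, bn, hbn1, hbn2, hbn3, hAn⟩ := hR n an hn (hyp z n hn).1 (hyp z n hn).2
    set sM := (hR (M:ℤ) aM le_rfl (hyp z _ le_rfl).1 (hyp z _ le_rfl).2).choose with hsM
    obtain ⟨bM, hbM⟩ := (hR (M:ℤ) aM le_rfl (hyp z _ le_rfl).1 (hyp z _ le_rfl).2).choose_spec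
    have hAM : AffOn g (M:ℤ) aM sM bM := hbM.2.2.2
    have hslope : (M:ℤ) - sM = n - sn :=
      AffOn.slope_eq hAM hAn (hMn.trans hn) (hyp z n hn).1 (hyp z n hn).2
        (fun w hw => dmem_nested hn (dmem_floor (x := (z:ℝ)) (M:ℤ)) (dmem_floor (x := (z:ℝ)) n) hw)
    have hE : n - ((M:ℤ) - sM) = sn := by omega
    have hmem : dmem ((g z : ℝ)) sn bn := hAn.maps (dmem_floor n)
    have hbfl : bn = ⌊((g z : ℝ)) * 2^sn⌋ := dmem_eq_floor hmem
    rw [hE, ← hbfl]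
    exact hAn

lemma E_const {g : Equiv.Perm (Set.Ico (0:ℝ) 1)} {M : ℕ}
    {E : UI → ℤ}
    (hE : ∀ z : UI, ∀ n : ℤ, (M:ℤ) ≤ n →
        AffOn g n ⌊(z:ℝ) * 2^n⌋ (n - E z) ⌊((g z : ℝ)) * 2^(n - E z)⌋)
    (hM : 1 ≤ M) {z z' : UI} {n a : ℤ} (hn : (M:ℤ) ≤ n)
    (hz : dmem (z:ℝ) n a) (hz' : dmem (z':ℝ) n a) : E z = E z' := by
  have h0n : (0:ℤ) ≤ n := le_trans (by positivity) hn
  have hfz : ⌊(z:ℝ) * 2^n⌋ = a := (dmem_eq_floor hz).symm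
  have hfz' : ⌊(z':ℝ) * 2^n⌋ = a := (dmem_eq_floor hz').symm
  have h1 := hE z n hn
  have h2 := hE z' n hn
  rw [hfz] at h1
  rw [hfz'] at h2
  have ha : 0 ≤ a := dmem_nonneg (UI.nonneg z) hz
  have ha2 : (a:ℝ) < 2^n := dmem_lt (UI.lt_one z) hz
  have := (AffOn.unique h1 h2 h0n ha ha2).1
  omega

lemma comp_orbit {g : Equiv.Perm (Set.Ico (0:ℝ) 1)} {M : ℕ}
    {E : UI → ℤ}
    (hE : ∀ z : UI, ∀ n : ℤ, (M:ℤ) ≤ n →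
        AffOn g n ⌊(z:ℝ) * 2^n⌋ (n - E z) ⌊((g z : ℝ)) * 2^(n - E z)⌋)
    (y : UI) (hH : ∀ i : ℕ, (∑ l ∈ Finset.range i, E ((⇑g)^[l] y)) ≤ 0)
    (i : ℕ) (x : UI) (hx : dmem (x:ℝ) (M:ℤ) ⌊(y:ℝ) * 2^(M:ℤ)⌋) :
    dmem (((⇑g)^[i] x : UI):ℝ) ((M:ℤ) - (∑ l ∈ Finset.range i, E ((⇑g)^[l] y)))
        ⌊(((⇑g)^[i] y : UI):ℝ) * 2^((M:ℤ) - (∑ l ∈ Finset.range i, E ((⇑g)^[l] y)))⌋ ∧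
    (((⇑g)^[i] x : UI):ℝ) =
      (⌊(((⇑g)^[i] y : UI):ℝ) * 2^((M:ℤ) - (∑ l ∈ Finset.range i, E ((⇑g)^[l] y)))⌋ : ℝ)
          * 2^(-((M:ℤ) - (∑ l ∈ Finset.range i, E ((⇑g)^[l] y))))
        + 2^(∑ l ∈ Finset.range i, E ((⇑g)^[l] y))
          * ((x:ℝ) - (⌊(y:ℝ) * 2^(M:ℤ)⌋ : ℝ) * 2^(-(M:ℤ))) := by
  induction i with
  | zero =>
    simp only [Finset.range_zero, Finset.sum_empty, Function.iterate_zero_apply, sub_zero]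
    refine ⟨hx, ?_⟩
    rw [zpow_zero]
    ring
  | succ i ih =>
    obtain ⟨ihm, ihf⟩ := ih
    set Ti := (∑ l ∈ Finset.range i, E ((⇑g)^[l] y)) with hTi
    have hTS : (∑ l ∈ Finset.range (i+1), E ((⇑g)^[l] y)) = Ti + E ((⇑g)^[i] y) :=
      Finset.sum_range_succ _ _
    have hTle : Ti ≤ 0 := hH i
    have hn : (M:ℤ) ≤ (M:ℤ) - Ti := by omega
    have hA := hE ((⇑g)^[i] y) ((M:ℤ) - Ti) hn
    have hmem := hA.maps ihm
    have hfor := hA ((⇑g)^[i] x) ihm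
    have hit : ∀ w : UI, (⇑g)^[i+1] w = g ((⇑g)^[i] w) := fun w =>
      Function.iterate_succ_apply' (⇑g) i w
    have hexp : ((M:ℤ) - Ti) - E ((⇑g)^[i] y) = (M:ℤ) - (Ti + E ((⇑g)^[i] y)) := by ring
    rw [hTS]
    rw [hit x, hit y]
    rw [← hexp]
    constructor
    · exact hmem
    · rw [hfor, ihf]
      have hse : ((M:ℤ) - Ti) - (((M:ℤ) - Ti) - E ((⇑g)^[i] y)) = E ((⇑g)^[i] y) := by ring
      rw [hse]
      have hmul : (2:ℝ)^(E ((⇑g)^[i] y)) * 2^Ti = 2^(Ti + E ((⇑g)^[i] y)) := by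
        rw [← zpow_add₀ (two_ne_zero : (2:ℝ) ≠ 0)]
        ring_nf
      linear_combination ((x:ℝ) - (⌊(y:ℝ) * 2^(M:ℤ)⌋ : ℝ) * 2^(-(M:ℤ))) * hmul

lemma main_step {g : Equiv.Perm (Set.Ico (0:ℝ) 1)} {M : ℕ} {E : UI → ℤ}
    (hM : 1 ≤ M)
    (hE : ∀ z : UI, ∀ n : ℤ, (M:ℤ) ≤ n →
        AffOn g n ⌊(z:ℝ) * 2^n⌋ (n - E z) ⌊((g z : ℝ)) * 2^(n - E z)⌋)
    (z z' : UI) (r r' : ℕ) (hr : 0 < r) (hr' : 0 < r') (a : ℤ)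
    (hza : ⌊(z:ℝ) * 2^(M:ℤ)⌋ = a) (hz'a : ⌊(z':ℝ) * 2^(M:ℤ)⌋ = a)
    (hHz : ∀ i : ℕ, (∑ l ∈ Finset.range i, E ((⇑g)^[l] z)) ≤ 0)
    (hfixz : (⇑g)^[r] z = z)
    (hminz' : ∀ k : ℕ, 0 < k → k < r' → (⇑g)^[k] z' ≠ z')
    (hT0 : (∑ l ∈ Finset.range (r*r'), E ((⇑g)^[l] z)) = 0) :
    r' ≤ r := by
  have hMz : (0:ℤ) ≤ (M:ℤ) := by positivity
  have hdz : dmem (z:ℝ) (M:ℤ) a := hza ▸ dmem_floor (M:ℤ)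
  have hdz' : dmem (z':ℝ) (M:ℤ) a := hz'a ▸ dmem_floor (M:ℤ)
  have hdf : ∀ x : UI, dmem (x:ℝ) (M:ℤ) a → dmem (x:ℝ) (M:ℤ) ⌊(z:ℝ) * 2^(M:ℤ)⌋ := by
    intro x hx; rw [hza]; exact hx
  have ha0 : 0 ≤ a := dmem_nonneg (UI.nonneg z) hdz
  have ha1 : (a:ℝ) < 2^(M:ℤ) := dmem_lt (UI.lt_one z) hdz
  have hfix2 : (⇑g)^[r*r'] z = z := by
    rw [Function.iterate_mul]; exact Function.iterate_fixed hfixz r'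
  -- a point of the base interval different from z
  obtain ⟨ξ, hξd, hξne⟩ : ∃ ξ : UI, dmem (ξ:ℝ) (M:ℤ) a ∧ (ξ:ℝ) ≠ (z:ℝ) := by
    have m1 : dmem ((a:ℝ) * 2^(-(M:ℤ))) (M:ℤ) a := dmem_left
    have m2 : dmem ((a:ℝ) * 2^(-(M:ℤ)) + 2^(-((M:ℤ)+1))) (M:ℤ) a := dmem_mid
    rcases eq_or_ne ((a:ℝ) * 2^(-(M:ℤ))) (z:ℝ) with h | h
    · refine ⟨⟨_, Set.mem_Ico.2 (dmem_sub_UI hMz ha0 ha1 m2)⟩, m2, ?_⟩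
      have hp := tzpos (-((M:ℤ)+1))
      intro hc
      simp only [← h] at hc
      nlinarith [hc]
    · exact ⟨⟨_, Set.mem_Ico.2 (dmem_sub_UI hMz ha0 ha1 m1)⟩, m1, h⟩
  -- Step A : the drift over one period vanishes
  have hTr : (∑ l ∈ Finset.range r, E ((⇑g)^[l] z)) = 0 := by
    by_contra hne
    have hTrlt : (∑ l ∈ Finset.range r, E ((⇑g)^[l] z)) < 0 := lt_of_le_of_ne (hHz r) hne
    have hnle : (M:ℤ) ≤ (M:ℤ) - (∑ l ∈ Finset.range r, E ((⇑g)^[l] z)) := by omega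
    have hcz := comp_orbit hE z hHz r z (hdf z hdz)
    rw [hfixz] at hcz
    obtain ⟨hczm, hczf⟩ := hcz
    have sub : ∀ x : UI, dmem (x:ℝ) (M:ℤ) a →
        ((((⇑g)^[r] x : UI):ℝ) - (z:ℝ)) =
          2^(∑ l ∈ Finset.range r, E ((⇑g)^[l] z)) * ((x:ℝ) - (z:ℝ)) := by
      intro x hx
      have hcx := comp_orbit hE z hHz r x (hdf x hx)
      rw [hfixz] at hcx
      linear_combination hcx.2 - hczf
    have memD : ∀ x : UI, dmem (x:ℝ) (M:ℤ) a → dmem (((⇑g)^[r] x : UI):ℝ) (M:ℤ) a := by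
      intro x hx
      have hcx := comp_orbit hE z hHz r x (hdf x hx)
      rw [hfixz] at hcx
      exact dmem_nested hnle hdz hczm hcx.1
    have iter : ∀ j : ℕ, ∀ x : UI, dmem (x:ℝ) (M:ℤ) a →
        dmem (((⇑g)^[r*j] x : UI):ℝ) (M:ℤ) a ∧
        ((((⇑g)^[r*j] x : UI):ℝ) - (z:ℝ)) =
          2^((∑ l ∈ Finset.range r, E ((⇑g)^[l] z)) * (j:ℤ)) * ((x:ℝ) - (z:ℝ)) := by
      intro j
      induction j with
      | zero =>
        intro x hx
        constructor
        · simpa using hx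
        · simp
      | succ j ih =>
        intro x hx
        have hidx : r * (j+1) = r + r * j := by ring
        have hiter : (⇑g)^[r*(j+1)] x = (⇑g)^[r] ((⇑g)^[r*j] x) := by
          rw [hidx, Function.iterate_add_apply]
        obtain ⟨ihm, ihf⟩ := ih x hx
        constructor
        · rw [hiter]; exact memD _ ihm
        · rw [hiter, sub _ ihm, ihf]
          rw [← mul_assoc, ← zpow_add₀ (two_ne_zero : (2:ℝ) ≠ 0)]
          congr 1
          push_cast
          ring
    have hbig : ∀ x : UI, dmem (x:ℝ) (M:ℤ) a →
        ((((⇑g)^[r*r'] x : UI):ℝ) - (z:ℝ)) = ((x:ℝ) - (z:ℝ)) := by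
      intro x hx
      have hcx := comp_orbit hE z hHz (r*r') x (hdf x hx)
      have hcz2 := comp_orbit hE z hHz (r*r') z (hdf z hdz)
      rw [hfix2] at hcx hcz2
      rw [hT0] at hcx hcz2
      simp only [zpow_zero, one_mul, sub_zero] at hcx hcz2
      linear_combination hcx.2 - hcz2.2
    have h1 := hbig ξ hξd
    have h2 := (iter r' ξ hξd).2
    rw [h1] at h2
    have hne2 : (ξ:ℝ) - (z:ℝ) ≠ 0 := sub_ne_zero.2 hξne
    have h4 : ((2:ℝ)^((∑ l ∈ Finset.range r, E ((⇑g)^[l] z)) * (r':ℤ)) - 1)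
        * ((ξ:ℝ) - (z:ℝ)) = 0 := by
      have expand : ((2:ℝ)^((∑ l ∈ Finset.range r, E ((⇑g)^[l] z)) * (r':ℤ)) - 1)
          * ((ξ:ℝ) - (z:ℝ))
          = 2^((∑ l ∈ Finset.range r, E ((⇑g)^[l] z)) * (r':ℤ)) * ((ξ:ℝ) - (z:ℝ))
            - ((ξ:ℝ) - (z:ℝ)) := by ring
      rw [expand, ← h2]
      ring
    rcases mul_eq_zero.1 h4 with h | h
    · have h5 : (2:ℝ)^((∑ l ∈ Finset.range r, E ((⇑g)^[l] z)) * (r':ℤ)) = 2^(0:ℤ) := by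
        rw [zpow_zero]; linarith
      have h6 := tz_inj h5
      rcases mul_eq_zero.1 h6 with h7 | h7
      · exact hne h7
      · have : r' = 0 := by exact_mod_cast h7
        omega
    · exact absurd h hne2
  -- Step B : the return map is the identity on the base interval
  have hid : ∀ x : UI, dmem (x:ℝ) (M:ℤ) a → (⇑g)^[r] x = x := by
    intro x hx
    have hcx := comp_orbit hE z hHz r x (hdf x hx)
    rw [hfixz] at hcx
    have hf := hcx.2
    rw [hTr] at hf
    simp only [sub_zero, zpow_zero, one_mul] at hf
    apply Subtype.ext
    rw [hf]
    ring
  have hz'fix : (⇑g)^[r] z' = z' := hid z' hdz'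
  by_contra hlt
  exact hminz' r hr (by omega) hz'fix

lemma key {g : Equiv.Perm (Set.Ico (0:ℝ) 1)} {M : ℕ} (hM : 1 ≤ M)
    {E : UI → ℤ}
    (hE : ∀ z : UI, ∀ n : ℤ, (M:ℤ) ≤ n →
        AffOn g n ⌊(z:ℝ) * 2^n⌋ (n - E z) ⌊((g z : ℝ)) * 2^(n - E z)⌋) :
    ∃ N : ℕ, 0 < N ∧ ∀ x : UI, ∀ p : ℕ, 0 < p → (⇑g)^[p] x = x →
      (∀ k : ℕ, 0 < k → k < p → (⇑g)^[k] x ≠ x) →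
      (∑ i ∈ Finset.range p, E ((⇑g)^[i] x)) ≤ 0 → p ≤ N := by
  classical
  have hMz : (0:ℤ) ≤ (M:ℤ) := by positivity
  set Good : ℤ → ℕ → Prop := fun a p => 0 < p ∧ ∃ y : UI, ⌊(y:ℝ)*2^(M:ℤ)⌋ = a ∧
    (∀ i : ℕ, (∑ l ∈ Finset.range i, E ((⇑g)^[l] y)) ≤ 0) ∧ (⇑g)^[p] y = y ∧
    (∀ k : ℕ, 0 < k → k < p → (⇑g)^[k] y ≠ y) with hGoodDef
  have inj : ∀ a p q, Good a p → Good a q → p = q := by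
    rintro a p q ⟨hp, y, hya, hHy, hfy, hmy⟩ ⟨hq, y', hy'a, hHy', hfy', hmy'⟩
    have hdy : dmem (y:ℝ) (M:ℤ) ⌊(y:ℝ)*2^(M:ℤ)⌋ := dmem_floor (M:ℤ)
    have hdy' : dmem (y':ℝ) (M:ℤ) ⌊(y:ℝ)*2^(M:ℤ)⌋ := by
      rw [hya, ← hy'a]; exact dmem_floor (M:ℤ)
    -- the two orbits share the same interval and exponent data
    have hTT : ∀ i : ℕ, (∑ l ∈ Finset.range i, E ((⇑g)^[l] y'))
        = (∑ l ∈ Finset.range i, E ((⇑g)^[l] y)) := by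
      intro i
      refine Finset.sum_congr rfl (fun l _ => ?_)
      have h1 := (comp_orbit hE y hHy l y' hdy').1
      have h2 := (comp_orbit hE y hHy l y hdy).1
      have hn : (M:ℤ) ≤ (M:ℤ) - (∑ t ∈ Finset.range l, E ((⇑g)^[t] y)) := by
        have := hHy l; omega
      exact E_const hE hM hn h1 h2
    rcases eq_or_lt_of_le (hHy (p*q)) with hc | hc
    · -- zero total drift : both return maps are the identity on the interval
      have h1 : q ≤ p := main_step hM hE y y' p q hp hq _ hya hy'a hHy hfy hmy' hc
      have h2 : p ≤ q := by
        refine main_step hM hE y' y q p hq hp _ hy'a hya hHy' hfy' hmy ?_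
        have hqp : q*p = p*q := Nat.mul_comm q p
        rw [hTT (q*p), hqp]
        exact hc
      omega
    · -- negative drift : the two base points coincide
      have hfix1 : (⇑g)^[p*q] y = y := by
        rw [Function.iterate_mul]; exact Function.iterate_fixed hfy q
      have hfix2 : (⇑g)^[p*q] y' = y' := by
        rw [Nat.mul_comm, Function.iterate_mul]; exact Function.iterate_fixed hfy' p
      have hcy := comp_orbit hE y hHy (p*q) y hdy
      have hcy' := comp_orbit hE y hHy (p*q) y' hdy'
      rw [hfix1] at hcy hcy'
      rw [hfix2] at hcy'
      have hsub : ((y:ℝ) - (y':ℝ)) =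
          2^(∑ l ∈ Finset.range (p*q), E ((⇑g)^[l] y)) * ((y:ℝ) - (y':ℝ)) := by
        linear_combination hcy.2 - hcy'.2
      have hyy' : (y:ℝ) = (y':ℝ) := by
        by_contra hne
        have hne2 : (y:ℝ) - (y':ℝ) ≠ 0 := sub_ne_zero.2 hne
        have h4 : ((2:ℝ)^(∑ l ∈ Finset.range (p*q), E ((⇑g)^[l] y)) - 1)
            * ((y:ℝ) - (y':ℝ)) = 0 := by linear_combination - hsub
        rcases mul_eq_zero.1 h4 with h | h
        · have h5 : (2:ℝ)^(∑ l ∈ Finset.range (p*q), E ((⇑g)^[l] y)) = 2^(0:ℤ) := by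
            rw [zpow_zero]; linarith
          have := tz_inj h5
          omega
        · exact absurd h hne2
      have hyy : y = y' := Subtype.ext hyy'
      have hn1 : ¬ p < q := by
        intro hlt
        exact hmy' p hp hlt (by rw [← hyy]; exact hfy)
      have hn2 : ¬ q < p := by
        intro hlt
        exact hmy q hq hlt (by rw [hyy]; exact hfy')
      omega
  set Pa : ℕ → ℕ := fun i => if h : ∃ r, Good ((i:ℤ)) r then h.choose else 0 with hPaDef
  refine ⟨1 + (Finset.range (2^M)).sup Pa, by omega, ?_⟩
  intro x p hp hfix hmin hdrift
  -- the exponent sequence is periodic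
  have hper : ∀ l : ℕ, E ((⇑g)^[l+p] x) = E ((⇑g)^[l] x) := by
    intro l
    rw [Function.iterate_add_apply, hfix]
  -- shifted window sums over one period
  have window : ∀ j : ℕ, (∑ l ∈ Finset.range p, E ((⇑g)^[j + l] x))
      = (∑ l ∈ Finset.range p, E ((⇑g)^[l] x)) := by
    intro j
    induction j with
    | zero => simp
    | succ j ih =>
      have h2 := Finset.sum_range_succ' (fun t => E ((⇑g)^[j+t] x)) p
      have h3 := Finset.sum_range_succ (fun t => E ((⇑g)^[j+t] x)) p
      have h4 : (∑ l ∈ Finset.range p, E ((⇑g)^[j+1+l] x))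
          = ∑ l ∈ Finset.range p, E ((⇑g)^[j+(l+1)] x) := by
        refine Finset.sum_congr rfl (fun l _ => ?_)
        have : j + 1 + l = j + (l + 1) := by omega
        rw [this]
      have h5 : E ((⇑g)^[j+p] x) = E ((⇑g)^[j+0] x) := by
        rw [Nat.add_zero]
        exact hper j
      rw [h4]
      have := h2.symm.trans h3
      omega
  -- sums decompose along multiples of the period
  have Tadd : ∀ j : ℕ, (∑ l ∈ Finset.range (j+p), E ((⇑g)^[l] x))
      = (∑ l ∈ Finset.range j, E ((⇑g)^[l] x))
        + (∑ l ∈ Finset.range p, E ((⇑g)^[l] x)) := by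
    intro j
    rw [Finset.sum_range_add]
    rw [window j]
  have Tmod : ∀ k r : ℕ, (∑ l ∈ Finset.range (k*p + r), E ((⇑g)^[l] x))
      = (∑ l ∈ Finset.range r, E ((⇑g)^[l] x))
        + (k:ℤ) * (∑ l ∈ Finset.range p, E ((⇑g)^[l] x)) := by
    intro k
    induction k with
    | zero => intro r; simp
    | succ k ih =>
      intro r
      have hidx : (k+1)*p + r = (k*p + r) + p := by ring
      rw [hidx, Tadd, ih r]
      push_cast
      ring
  -- rebase at a maximum of the partial sums
  obtain ⟨jm, hjmem, hjmax⟩ := Finset.exists_max_image (Finset.range p)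
    (fun j => ∑ l ∈ Finset.range j, E ((⇑g)^[l] x)) ⟨0, Finset.mem_range.2 hp⟩
  set y : UI := (⇑g)^[jm] x with hydef
  have hcy : ∀ l : ℕ, E ((⇑g)^[l] y) = E ((⇑g)^[jm + l] x) := by
    intro l
    rw [hydef, ← Function.iterate_add_apply, Nat.add_comm]
  have hTy : ∀ i : ℕ, (∑ l ∈ Finset.range i, E ((⇑g)^[l] y))
      = (∑ l ∈ Finset.range (jm + i), E ((⇑g)^[l] x))
        - (∑ l ∈ Finset.range jm, E ((⇑g)^[l] x)) := by
    intro i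
    rw [Finset.sum_range_add]
    have : (∑ l ∈ Finset.range i, E ((⇑g)^[l] y))
        = ∑ l ∈ Finset.range i, E ((⇑g)^[jm + l] x) :=
      Finset.sum_congr rfl (fun l _ => hcy l)
    omega
  have H : ∀ i : ℕ, (∑ l ∈ Finset.range i, E ((⇑g)^[l] y)) ≤ 0 := by
    intro i
    rw [hTy i]
    have hdm := Nat.div_add_mod (jm + i) p
    have hlt : (jm + i) % p < p := Nat.mod_lt _ hp
    have hrw : jm + i = ((jm + i)/p) * p + (jm + i) % p := by linarith [hdm]
    have hval : (∑ l ∈ Finset.range (jm+i), E ((⇑g)^[l] x))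
        = (∑ l ∈ Finset.range ((jm+i) % p), E ((⇑g)^[l] x))
          + (((jm+i)/p : ℕ):ℤ) * (∑ l ∈ Finset.range p, E ((⇑g)^[l] x)) := by
      conv_lhs => rw [hrw]
      exact Tmod _ _
    have h1 : (∑ l ∈ Finset.range ((jm+i) % p), E ((⇑g)^[l] x))
        ≤ (∑ l ∈ Finset.range jm, E ((⇑g)^[l] x)) :=
      hjmax _ (Finset.mem_range.2 hlt)
    have h2 : (((jm+i)/p : ℕ):ℤ) * (∑ l ∈ Finset.range p, E ((⇑g)^[l] x)) ≤ 0 := by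
      have hk : (0:ℤ) ≤ (((jm+i)/p : ℕ):ℤ) := by positivity
      exact mul_nonpos_iff.2 (Or.inl ⟨hk, hdrift⟩)
    linarith [hval, h1, h2]
  have hfy : (⇑g)^[p] y = y := by
    rw [hydef, ← Function.iterate_add_apply, Nat.add_comm, Function.iterate_add_apply, hfix]
  have hmy : ∀ k : ℕ, 0 < k → k < p → (⇑g)^[k] y ≠ y := by
    intro k hk hkp hcon
    have hinj : Function.Injective ((⇑g)^[jm]) :=
      Function.Injective.iterate (g.injective) jm
    rw [hydef, ← Function.iterate_add_apply, Nat.add_comm, Function.iterate_add_apply] at hcon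
    exact hmin k hk hkp (hinj hcon)
  have hdrifty : (∑ l ∈ Finset.range p, E ((⇑g)^[l] y)) ≤ 0 := H p
  set a : ℤ := ⌊(y:ℝ)*2^(M:ℤ)⌋ with hadef
  have hGa : Good a p := ⟨hp, y, rfl, H, hfy, hmy⟩
  have ha0 : 0 ≤ a := dmem_nonneg (UI.nonneg y) (dmem_floor (M:ℤ))
  have ha1 : a < 2 ^ ((M:ℤ)).toNat :=
    int_lt_two_zpow hMz (dmem_lt (UI.lt_one y) (dmem_floor (M:ℤ)))
  have haM : a < 2 ^ M := by rwa [Int.toNat_natCast] at ha1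
  have hab : ((a.toNat : ℤ)) = a := Int.toNat_of_nonneg ha0
  have hGa' : Good ((a.toNat : ℤ)) p := by rw [hab]; exact hGa
  have hex : ∃ r, Good ((a.toNat : ℤ)) r := ⟨p, hGa'⟩
  have hPaval : Pa a.toNat = hex.choose := dif_pos hex
  have hGr : Good ((a.toNat : ℤ)) hex.choose := hex.choose_spec
  have hpq : p = hex.choose := inj _ p hex.choose hGa' hGr
  have hmem : a.toNat ∈ Finset.range (2^M) := by
    refine Finset.mem_range.2 ?_
    have h7 : (a.toNat : ℤ) < ((2^M : ℕ) : ℤ) := by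
      rw [hab]
      exact_mod_cast haM
    exact_mod_cast h7
  have := Finset.le_sup (f := Pa) hmem
  omega


lemma tz_le {s t : ℤ} (h : (2:ℝ)^s ≤ 2^t) : s ≤ t :=
  (zpow_le_zpow_iff_right₀ (by norm_num : (1:ℝ) < 2)).1 h

lemma dy_scale {r : ℝ} {aa : ℤ} {bb B : ℕ} (h : r = (aa:ℝ)/2^bb) (hle : bb ≤ B) :
    ∃ c : ℤ, r = (c:ℝ) * 2^(-(B:ℤ)) := by
  refine ⟨aa * 2^(B - bb), ?_⟩
  have hcast : ((B - bb:ℕ):ℤ) = (B:ℤ) - bb := by omega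
  have h1 : ((aa * 2^(B-bb) : ℤ) : ℝ) = (aa:ℝ) * (2:ℝ)^(((B:ℤ) - bb)) := by
    rw [Int.cast_mul, ← hcast]
    norm_num
  rw [h1, h]
  rw [mul_assoc, ← zpow_add₀ (two_ne_zero : (2:ℝ) ≠ 0)]
  have h2 : (B:ℤ) - bb + -(B:ℤ) = -(bb:ℤ) := by ring
  rw [h2, zpow_neg, zpow_natCast]
  ring

lemma dy_refine {r : ℝ} {B : ℕ} {n : ℤ} (h : ∃ c:ℤ, r = (c:ℝ) * 2^(-(B:ℤ)))
    (hn : (B:ℤ) ≤ n) : ∃ d : ℤ, r = (d:ℝ) * 2^(-n) := by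
  obtain ⟨c, hc⟩ := h
  refine ⟨c * 2^((n - B).toNat), ?_⟩
  have hcast : (((n - B).toNat:ℕ):ℤ) = n - (B:ℤ) := by omega
  have h1 : ((c * 2^((n-B).toNat) : ℤ) : ℝ) = (c:ℝ) * (2:ℝ)^(n - (B:ℤ)) := by
    rw [Int.cast_mul, ← hcast]
    norm_num
  rw [h1, hc, mul_assoc, ← zpow_add₀ (two_ne_zero : (2:ℝ) ≠ 0)]
  congr 2
  ring

lemma find_piece {m : ℕ} {v : Fin (m+1) → ℝ} (hmono : StrictMono v)
    (h0 : v 0 = 0) (h1 : v (Fin.last m) = 1) {x : ℝ} (hx0 : 0 ≤ x) (hx1 : x < 1) :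
    ∃ i : Fin m, v i.castSucc ≤ x ∧ x < v i.succ := by
  classical
  set P : ℕ → Prop := fun n => ∃ h : n < m + 1, v ⟨n, h⟩ ≤ x with hP
  have hP0 : P 0 := ⟨Nat.succ_pos m, by
    have : (⟨0, Nat.succ_pos m⟩ : Fin (m+1)) = 0 := rfl
    rw [this, h0]; exact hx0⟩
  set j := Nat.findGreatest P m with hj
  have hPj : P j := Nat.findGreatest_spec (Nat.zero_le m) hP0
  have hjle : j ≤ m := Nat.findGreatest_le m
  have hPm : ¬ P m := by
    rintro ⟨h, hle⟩
    have : (⟨m, h⟩ : Fin (m+1)) = Fin.last m := rfl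
    rw [this, h1] at hle
    linarith
  have hjm : j < m := lt_of_le_of_ne hjle (fun h => hPm (h ▸ hPj))
  refine ⟨⟨j, hjm⟩, ?_, ?_⟩
  · obtain ⟨h, hle⟩ := hPj
    exact hle
  · by_contra hcon
    push_neg at hcon
    have hp1 : P (j+1) := ⟨by omega, hcon⟩
    exact Nat.findGreatest_is_greatest (P := P) (n := m) (k := j+1) (by omega) (by omega) hp1

lemma rigid_of_piecewise {g : Equiv.Perm (Set.Ico (0:ℝ) 1)} {m B : ℕ}
    {v : Fin (m+1) → ℝ} (hv : StrictMono v) (hv0 : v 0 = 0) (hv1 : v (Fin.last m) = 1)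
    (hvd : ∀ i, ∃ c : ℤ, v i = (c:ℝ) * 2^(-(B:ℤ)))
    (hpc : ∀ i : Fin m, ∃ k : ℤ, ∃ w w' : ℝ,
      (∃ c:ℤ, w = (c:ℝ) * 2^(-(B:ℤ))) ∧ (∃ c:ℤ, w' = (c:ℝ) * 2^(-(B:ℤ))) ∧
      0 ≤ w ∧ w' ≤ 1 ∧
      w' - w = 2^k * (v i.succ - v i.castSucc) ∧
      ∀ x : UI, (x:ℝ) ∈ Set.Ico (v i.castSucc) (v i.succ) →
        (g x : ℝ) = 2^k * ((x:ℝ) - v i.castSucc) + w) :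
    Rigid g (2*B + 1) := by
  intro n a hn ha0 ha1
  have hBn : ((B:ℤ)) ≤ n := by
    have : ((2*B+1 : ℕ):ℤ) = 2*(B:ℤ)+1 := by push_cast; ring
    omega
  have hqn := tzpos n
  have hqn' := tzpos (-n)
  set x0 : ℝ := (a:ℝ) * 2^(-n) with hx0def
  have hx00 : 0 ≤ x0 := by positivity
  have hx01 : x0 < 1 := by
    have h1 : x0 < 2^n * 2^(-n) := by
      rw [hx0def]; nlinarith
    rwa [← zpow_add₀ (two_ne_zero : (2:ℝ) ≠ 0), add_neg_cancel, zpow_zero] at h1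
  obtain ⟨i, hi1, hi2⟩ := find_piece hv hv0 hv1 hx00 hx01
  obtain ⟨k, w, w', hwd, hw'd, hw0, hw'1, hslope, hform⟩ := hpc i
  -- basic facts about the piece
  have hvlt : v i.castSucc < v i.succ := hv (Fin.castSucc_lt_succ : i.castSucc < i.succ)
  have hv00 : (0:ℝ) ≤ v i.castSucc := by
    rw [← hv0]; exact hv.monotone (Fin.zero_le _)
  have hv11 : v i.succ ≤ 1 := by
    rw [← hv1]; exact hv.monotone (Fin.le_last _)
  have hDv1 : v i.succ - v i.castSucc ≤ 1 := by linarith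
  have hDvB : (2:ℝ)^(-(B:ℤ)) ≤ v i.succ - v i.castSucc := by
    obtain ⟨c1, hc1⟩ := hvd i.castSucc
    obtain ⟨c2, hc2⟩ := hvd i.succ
    have hpB := tzpos (-(B:ℤ))
    have hcc : (c1:ℝ) < c2 := by
      rw [hc1, hc2] at hvlt
      exact lt_of_mul_lt_mul_right hvlt hpB.le
    have hcc' : (c1:ℤ) + 1 ≤ c2 := by exact_mod_cast hcc
    have : ((c1:ℝ) + 1) * 2^(-(B:ℤ)) ≤ (c2:ℝ) * 2^(-(B:ℤ)) := by
      have : ((c1:ℝ)+1) ≤ c2 := by exact_mod_cast hcc'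
      nlinarith
    rw [hc1, hc2]
    nlinarith
  have hwwB : (2:ℝ)^(-(B:ℤ)) ≤ w' - w := by
    obtain ⟨c1, hc1⟩ := hwd
    obtain ⟨c2, hc2⟩ := hw'd
    have hpB := tzpos (-(B:ℤ))
    have hww : (0:ℝ) < w' - w := by
      rw [hslope]
      have := tzpos k
      nlinarith
    have hcc : (c1:ℝ) < c2 := by
      rw [hc1, hc2] at hww
      nlinarith
    have hcc' : (c1:ℤ) + 1 ≤ c2 := by exact_mod_cast hcc
    have h5 : ((c1:ℝ) + 1) ≤ c2 := by exact_mod_cast hcc'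
    rw [hc1, hc2]
    nlinarith
  have hww1 : w' - w ≤ 1 := by linarith
  -- slope exponent bounds
  have hkB : k ≤ (B:ℤ) := by
    have h1 : (2:ℝ)^k * 2^(-(B:ℤ)) ≤ 1 := by
      calc (2:ℝ)^k * 2^(-(B:ℤ)) ≤ 2^k * (v i.succ - v i.castSucc) := by
            have := tzpos k; nlinarith
        _ = w' - w := hslope.symm
        _ ≤ 1 := hww1
    have h2 : (2:ℝ)^(k - (B:ℤ)) ≤ 2^(0:ℤ) := by
      rw [zpow_zero, ← zpow_add₀ (two_ne_zero : (2:ℝ) ≠ 0)] at *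
      exact h1
    have := tz_le h2
    omega
  have hkB' : -(B:ℤ) ≤ k := by
    have h1 : (2:ℝ)^(-(B:ℤ)) ≤ 2^k := by
      calc (2:ℝ)^(-(B:ℤ)) ≤ w' - w := hwwB
        _ = 2^k * (v i.succ - v i.castSucc) := hslope
        _ ≤ 2^k * 1 := by have := tzpos k; nlinarith
        _ = 2^k := by ring
    exact tz_le h1
  -- the interval is inside the piece
  obtain ⟨dv, hdv⟩ := dy_refine (hvd i.castSucc) hBn
  obtain ⟨dv', hdv'⟩ := dy_refine (hvd i.succ) hBn
  have hdvlt : (dv:ℝ) ≤ a := by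
    have h1 : (dv:ℝ) * 2^(-n) ≤ (a:ℝ) * 2^(-n) := by rw [← hdv]; exact hi1
    have : (dv:ℝ) ≤ (a:ℝ) := le_of_mul_le_mul_right h1 hqn'
    exact this
  have hdv'gt : (a:ℝ) + 1 ≤ dv' := by
    have h1 : (a:ℝ) * 2^(-n) < (dv':ℝ) * 2^(-n) := by rw [← hdv']; exact hi2
    have h2 : (a:ℝ) < dv' := lt_of_mul_lt_mul_right h1 hqn'.le
    have h3 : a < dv' := by exact_mod_cast h2
    have : a + 1 ≤ dv' := by omega
    exact_mod_cast this
  have hsub : ∀ z : ℝ, dmem z n a → v i.castSucc ≤ z ∧ z < v i.succ := by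
    intro z hz
    obtain ⟨h1, h2⟩ := hz
    constructor
    · rw [hdv]
      have h3 : (dv:ℝ) * 2^(-n) ≤ (a:ℝ) * 2^(-n) :=
        mul_le_mul_of_nonneg_right hdvlt hqn'.le
      linarith
    · rw [hdv']
      have h3 : ((a:ℝ)+1) * 2^(-n) ≤ (dv':ℝ) * 2^(-n) :=
        mul_le_mul_of_nonneg_right hdv'gt hqn'.le
      linarith
  -- construct the image interval
  obtain ⟨dw, hdw⟩ := hwd
  set s : ℤ := n - k with hsdef
  set b : ℤ := (a - dv) + dw * 2^((n - k - B).toNat) with hbdef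
  have hnkB : (0:ℤ) ≤ n - k - B := by omega
  have hcast : (((n - k - B).toNat : ℕ):ℤ) = n - k - (B:ℤ) := by omega
  have hbr : (b:ℝ) * 2^(-s) = 2^k * (x0 - v i.castSucc) + w := by
    have h1 : ((b:ℤ):ℝ) = (a:ℝ) - dv + (dw:ℝ) * (2:ℝ)^(n - k - (B:ℤ)) := by
      rw [hbdef]
      push_cast
      rw [← zpow_natCast (2:ℝ) ((n - k - B).toNat)]
      rw [show (((n - k - B).toNat : ℕ):ℤ) = n - k - (B:ℤ) from hcast]
    rw [h1, hdv, hdw, hx0def, hsdef]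
    have f1 : (2:ℝ)^(n - k - (B:ℤ)) * 2^(-(n-k)) = 2^(-(B:ℤ)) := by
      rw [← zpow_add₀ (two_ne_zero : (2:ℝ) ≠ 0)]
      congr 1
      ring
    have f2 : (2:ℝ)^(-(n-k)) = 2^k * 2^(-n) := by
      rw [← zpow_add₀ (two_ne_zero : (2:ℝ) ≠ 0)]
      congr 1
      ring
    linear_combination ((dw:ℝ)) * f1 + ((a:ℝ) - (dv:ℝ)) * f2
  refine ⟨s, b, ?_, ?_, ?_, ?_⟩
  · rw [hsdef]
    have hB1 : (B:ℤ) ≤ 2*B+1 := by push_cast; omega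
    rw [abs_le]
    constructor
    · have : ((2*B+1 : ℕ):ℤ) = 2*(B:ℤ)+1 := by push_cast; ring
      omega
    · have : ((2*B+1 : ℕ):ℤ) = 2*(B:ℤ)+1 := by push_cast; ring
      omega
  · -- 0 ≤ b
    have h1 : (0:ℝ) ≤ (b:ℝ) * 2^(-s) := by
      rw [hbr]
      have := tzpos k
      nlinarith
    have h2 : (0:ℝ) ≤ (b:ℝ) := by
      by_contra hcon
      push_neg at hcon
      have := tzpos (-s)
      nlinarith
    exact_mod_cast h2
  · -- b < 2^s
    have hps := tzpos s
    have hps' := tzpos (-s)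
    have h2s : (2:ℝ)^(-s) = 2^k * 2^(-n) := by
      rw [← zpow_add₀ (two_ne_zero : (2:ℝ) ≠ 0)]
      congr 1
      rw [hsdef]; ring
    have h1 : ((b:ℝ) + 1) * 2^(-s) ≤ 1 := by
      have hstep : ((b:ℝ) + 1) * 2^(-s) = 2^k * (x0 + 2^(-n) - v i.castSucc) + w := by
        rw [add_mul, hbr, one_mul, h2s]
        ring
      rw [hstep]
      have hend : x0 + 2^(-n) ≤ v i.succ := by
        rw [hdv', hx0def]
        have : ((a:ℝ)+1) * 2^(-n) ≤ (dv':ℝ) * 2^(-n) := by nlinarith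
        linarith [this]
      have hk2 := tzpos k
      calc (2:ℝ)^k * (x0 + 2^(-n) - v i.castSucc) + w
          ≤ 2^k * (v i.succ - v i.castSucc) + w := by nlinarith
        _ = w' - w + w := by rw [← hslope]
        _ ≤ 1 := by linarith
    have h2 : ((b:ℝ) + 1) ≤ 2^s := by
      have h3 : ((b:ℝ)+1) * 2^(-s) * 2^s ≤ 1 * 2^s := by nlinarith
      rwa [mul_assoc, ← zpow_add₀ (two_ne_zero : (2:ℝ) ≠ 0), neg_add_cancel,
        zpow_zero, mul_one, one_mul] at h3
    linarith
  · -- the affine formula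
    intro x hx
    have hxp := hsub (x:ℝ) hx
    have hfx := hform x (Set.mem_Ico.2 hxp)
    rw [hfx]
    have hns : n - s = k := by rw [hsdef]; ring
    rw [hns, hbr, hx0def]
    ring

lemma thompson_rigid {f : Equiv.Perm (Set.Ico (0:ℝ) 1)}
    (hf : ∃ m : ℕ, ∃ t u : Fin (m + 1) → ℝ,
      StrictMono t ∧ t 0 = 0 ∧ t (Fin.last m) = 1 ∧
      (∀ i, ∃ a : ℤ, ∃ b : ℕ, t i = (a:ℝ) / 2 ^ b) ∧
      StrictMono u ∧ u 0 = 0 ∧ u (Fin.last m) = 1 ∧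
      (∀ i, ∃ a : ℤ, ∃ b : ℕ, u i = (a:ℝ) / 2 ^ b) ∧
      ∃ σ : Equiv.Perm (Fin m), ∀ i : Fin m, ∃ k : ℤ,
        (2 : ℝ) ^ k * (t i.succ - t i.castSucc) = u (σ i).succ - u (σ i).castSucc ∧
        ∀ x : Set.Ico (0:ℝ) 1, (x : ℝ) ∈ Set.Ico (t i.castSucc) (t i.succ) →
          (f x : ℝ) = (2 : ℝ) ^ k * ((x : ℝ) - t i.castSucc) + u (σ i).castSucc) :
    ∃ Mf Mg : ℕ, 1 ≤ Mf ∧ 1 ≤ Mg ∧ Rigid f Mf ∧ Rigid f.symm Mg := by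
  classical
  obtain ⟨m, t, u, hts, ht0, ht1, htd, hus, hu0, hu1, hud, σ, hσ⟩ := hf
  -- common dyadic denominator
  set B : ℕ := Finset.sup Finset.univ (fun i : Fin (m+1) =>
    max (htd i).choose_spec.choose (hud i).choose_spec.choose) with hBdef
  have hle : ∀ i : Fin (m+1),
      max (htd i).choose_spec.choose (hud i).choose_spec.choose ≤ B :=
    fun i => Finset.le_sup (f := fun i : Fin (m+1) =>
      max (htd i).choose_spec.choose (hud i).choose_spec.choose) (Finset.mem_univ i)
  have htB : ∀ i, ∃ c : ℤ, t i = (c:ℝ) * 2^(-(B:ℤ)) := by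
    intro i
    refine dy_scale (htd i).choose_spec.choose_spec ?_
    exact le_trans (le_max_left _ _) (hle i)
  have huB : ∀ i, ∃ c : ℤ, u i = (c:ℝ) * 2^(-(B:ℤ)) := by
    intro i
    refine dy_scale (hud i).choose_spec.choose_spec ?_
    exact le_trans (le_max_right _ _) (hle i)
  -- bounds for the partition values
  have hu00 : ∀ j, (0:ℝ) ≤ u j := by
    intro j; rw [← hu0]; exact hus.monotone (Fin.zero_le _)
  have hu11 : ∀ j, u j ≤ 1 := by
    intro j; rw [← hu1]; exact hus.monotone (Fin.le_last _)
  have ht00 : ∀ j, (0:ℝ) ≤ t j := by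
    intro j; rw [← ht0]; exact hts.monotone (Fin.zero_le _)
  have ht11 : ∀ j, t j ≤ 1 := by
    intro j; rw [← ht1]; exact hts.monotone (Fin.le_last _)
  refine ⟨2*B+1, 2*B+1, by omega, by omega, ?_, ?_⟩
  · -- rigidity of f
    refine rigid_of_piecewise hts ht0 ht1 htB ?_
    intro i
    obtain ⟨k, hk1, hk2⟩ := hσ i
    exact ⟨k, u (σ i).castSucc, u (σ i).succ, huB _, huB _, hu00 _, hu11 _,
      by rw [← hk1], hk2⟩
  · -- rigidity of the inverse
    refine rigid_of_piecewise hus hu0 hu1 huB ?_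
    intro j
    obtain ⟨k, hk1, hk2⟩ := hσ (σ.symm j)
    rw [Equiv.apply_symm_apply] at hk1 hk2
    have hpk := tzpos k
    have hpk' := tzpos (-k)
    have hcancel : (2:ℝ)^(-k) * 2^k = 1 := by
      rw [← zpow_add₀ (two_ne_zero : (2:ℝ) ≠ 0), neg_add_cancel, zpow_zero]
    refine ⟨-k, t (σ.symm j).castSucc, t (σ.symm j).succ, htB _, htB _, ht00 _, ht11 _,
      ?_, ?_⟩
    · -- measure relation for the inverse
      calc t (σ.symm j).succ - t (σ.symm j).castSucc
          = (2^(-k) * 2^k) * (t (σ.symm j).succ - t (σ.symm j).castSucc) := by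
            rw [hcancel]; ring
        _ = 2^(-k) * (u j.succ - u j.castSucc) := by
            rw [mul_assoc, hk1]
    · -- inverse formula
      intro y hy
      obtain ⟨hy1, hy2⟩ := Set.mem_Ico.1 hy
      have htlt : t (σ.symm j).castSucc < t (σ.symm j).succ :=
        hts Fin.castSucc_lt_succ
      set xr : ℝ := 2^(-k) * ((y:ℝ) - u j.castSucc) + t (σ.symm j).castSucc with hxrdef
      have hxr1 : t (σ.symm j).castSucc ≤ xr := by
        rw [hxrdef]
        nlinarith
      have hxr2 : xr < t (σ.symm j).succ := by
        have h5 : (2:ℝ)^(-k) * ((y:ℝ) - u j.castSucc) < 2^(-k) * (u j.succ - u j.castSucc) := by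
          nlinarith
        have h6 : (2:ℝ)^(-k) * (u j.succ - u j.castSucc) =
            t (σ.symm j).succ - t (σ.symm j).castSucc := by
          rw [← hk1, ← mul_assoc, hcancel]; ring
        rw [hxrdef]
        linarith [h5, h6.le]
      have hxUI : 0 ≤ xr ∧ xr < 1 := by
        constructor
        · linarith [ht00 (σ.symm j).castSucc]
        · linarith [ht11 (σ.symm j).succ]
      set X : UI := ⟨xr, Set.mem_Ico.2 hxUI⟩ with hXdef
      have hfX : f X = y := by
        apply Subtype.ext
        rw [hk2 X (Set.mem_Ico.2 ⟨hxr1, hxr2⟩)]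
        show (2:ℝ)^k * (xr - t (σ.symm j).castSucc) + u j.castSucc = (y:ℝ)
        rw [hxrdef]
        have : (2:ℝ)^k * (2^(-k) * ((y:ℝ) - u j.castSucc)) = (y:ℝ) - u j.castSucc := by
          rw [← mul_assoc, mul_comm ((2:ℝ)^k), hcancel]; ring
        calc (2:ℝ)^k * (2^(-k) * ((y:ℝ) - u j.castSucc) + t (σ.symm j).castSucc
              - t (σ.symm j).castSucc) + u j.castSucc
            = 2^k * (2^(-k) * ((y:ℝ) - u j.castSucc)) + u j.castSucc := by ring
          _ = (y:ℝ) := by rw [this]; ring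
      rw [← hfX, Equiv.symm_apply_apply]

lemma E_flip {f : Equiv.Perm (Set.Ico (0:ℝ) 1)} {Mf Mg : ℕ}
    (hMf : 1 ≤ Mf) (hMg : 1 ≤ Mg) {E1 E2 : UI → ℤ}
    (hE1b : ∀ z, |E1 z| ≤ (Mf:ℤ))
    (hE1 : ∀ z : UI, ∀ n : ℤ, (Mf:ℤ) ≤ n →
        AffOn f n ⌊(z:ℝ) * 2^n⌋ (n - E1 z) ⌊((f z : ℝ)) * 2^(n - E1 z)⌋)
    (hE2 : ∀ z : UI, ∀ n : ℤ, (Mg:ℤ) ≤ n →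
        AffOn f.symm n ⌊(z:ℝ) * 2^n⌋ (n - E2 z) ⌊((f.symm z : ℝ)) * 2^(n - E2 z)⌋) :
    ∀ z : UI, E2 z = - E1 (f.symm z) := by
  intro z
  set w : UI := f.symm z with hwdef
  set n : ℤ := ((Mf + Mg : ℕ) : ℤ) with hndef
  have hn1 : (Mf:ℤ) ≤ n := by rw [hndef]; push_cast; omega
  have hn0 : (0:ℤ) ≤ n := by rw [hndef]; positivity
  have hE1w := hE1 w n hn1
  have hfw : f w = z := f.apply_symm_apply z
  rw [hfw] at hE1w
  set s0 : ℤ := n - E1 w with hs0def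
  have hs : (Mg:ℤ) ≤ s0 := by
    have := hE1b w
    rw [hs0def, hndef]
    rw [abs_le] at this
    push_cast
    omega
  have hs00 : (0:ℤ) ≤ s0 := le_trans (by positivity) hs
  have hA2 := hE2 z s0 hs
  set aZ : ℤ := ⌊(z:ℝ) * 2^s0⌋ with haZdef
  set aW : ℤ := ⌊(w:ℝ) * 2^n⌋ with haWdef
  have haZ0 : 0 ≤ aZ := dmem_nonneg (UI.nonneg z) (dmem_floor s0)
  have haZ1 : (aZ:ℝ) < 2^s0 := dmem_lt (UI.lt_one z) (dmem_floor s0)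
  have haW0 : 0 ≤ aW := dmem_nonneg (UI.nonneg w) (dmem_floor n)
  have haW1 : (aW:ℝ) < 2^n := dmem_lt (UI.lt_one w) (dmem_floor n)
  have hcancel1 : (2:ℝ)^(s0-n) * 2^(-s0) = 2^(-n) := by
    rw [← zpow_add₀ (two_ne_zero : (2:ℝ) ≠ 0)]
    congr 1
    ring
  have hcancel2 : (2:ℝ)^(n-s0) * 2^(s0-n) = 1 := by
    rw [← zpow_add₀ (two_ne_zero : (2:ℝ) ≠ 0)]
    rw [show n - s0 + (s0 - n) = 0 by ring, zpow_zero]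
  -- the inverse is affine on the image interval
  have hA1' : AffOn f.symm s0 aZ n aW := by
    intro y hy
    obtain ⟨hy1, hy2⟩ := hy
    have hpsn := tzpos (s0 - n)
    set xr : ℝ := (aW:ℝ) * 2^(-n) + 2^(s0-n) * ((y:ℝ) - (aZ:ℝ)*2^(-s0)) with hxrdef
    have hxm : dmem xr n aW := by
      constructor
      · rw [hxrdef]; nlinarith
      · rw [hxrdef]
        have h5 : (2:ℝ)^(s0-n) * ((y:ℝ) - (aZ:ℝ)*2^(-s0)) < 2^(s0-n) * 2^(-s0) := by
          nlinarith
        rw [hcancel1] at h5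
        linarith
    have hxUI := dmem_sub_UI hn0 haW0 haW1 hxm
    set X : UI := ⟨xr, Set.mem_Ico.2 hxUI⟩ with hXdef
    have hfX : f X = y := by
      apply Subtype.ext
      rw [hE1w X hxm]
      show (aZ:ℝ) * 2^(-s0) + 2^(n-s0) * (xr - (aW:ℝ)*2^(-n)) = (y:ℝ)
      rw [hxrdef]
      have h7 : (2:ℝ)^(n-s0) * ((aW:ℝ) * 2^(-n) + 2^(s0-n) * ((y:ℝ) - (aZ:ℝ)*2^(-s0))
          - (aW:ℝ)*2^(-n)) = (2^(n-s0) * 2^(s0-n)) * ((y:ℝ) - (aZ:ℝ)*2^(-s0)) := by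
        ring
      rw [h7, hcancel2]
      ring
    rw [← hfX, Equiv.symm_apply_apply]
  have huniq := (AffOn.unique hA1' hA2 hs00 haZ0 haZ1).1
  omega

lemma period_bound {f : Equiv.Perm (Set.Ico (0:ℝ) 1)}
    (hf : ∃ m : ℕ, ∃ t u : Fin (m + 1) → ℝ,
      StrictMono t ∧ t 0 = 0 ∧ t (Fin.last m) = 1 ∧
      (∀ i, ∃ a : ℤ, ∃ b : ℕ, t i = (a:ℝ) / 2 ^ b) ∧
      StrictMono u ∧ u 0 = 0 ∧ u (Fin.last m) = 1 ∧
      (∀ i, ∃ a : ℤ, ∃ b : ℕ, u i = (a:ℝ) / 2 ^ b) ∧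
      ∃ σ : Equiv.Perm (Fin m), ∀ i : Fin m, ∃ k : ℤ,
        (2 : ℝ) ^ k * (t i.succ - t i.castSucc) = u (σ i).succ - u (σ i).castSucc ∧
        ∀ x : Set.Ico (0:ℝ) 1, (x : ℝ) ∈ Set.Ico (t i.castSucc) (t i.succ) →
          (f x : ℝ) = (2 : ℝ) ^ k * ((x : ℝ) - t i.castSucc) + u (σ i).castSucc) :
    ∃ N : ℕ, 0 < N ∧ ∀ x : UI, ∀ p : ℕ, 0 < p → (⇑f)^[p] x = x →
      (∀ k : ℕ, 0 < k → k < p → (⇑f)^[k] x ≠ x) → p ≤ N := by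
  obtain ⟨Mf, Mg, hMf, hMg, hRf, hRg⟩ := thompson_rigid hf
  obtain ⟨E1, hE1b, hE1⟩ := exists_E hMf hRf
  obtain ⟨E2, hE2b, hE2⟩ := exists_E hMg hRg
  obtain ⟨N1, hN1, hkey1⟩ := key hMf hE1
  obtain ⟨N2, hN2, hkey2⟩ := key hMg hE2
  have hflip := E_flip hMf hMg hE1b hE1 hE2
  refine ⟨N1 + N2, by omega, ?_⟩
  intro x p hp hfix hmin
  rcases le_or_gt (∑ i ∈ Finset.range p, E1 ((⇑f)^[i] x)) 0 with hK | hK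
  · exact le_trans (hkey1 x p hp hfix hmin hK) (by omega)
  · have hLI : Function.LeftInverse ⇑f.symm ⇑f := f.symm_apply_apply
    have hRI : Function.LeftInverse ⇑f ⇑f.symm := f.apply_symm_apply
    have hsymk : ∀ k : ℕ, k ≤ p → (⇑f.symm)^[k] x = (⇑f)^[p-k] x := by
      intro k hk
      have h1 : (⇑f)^[k] ((⇑f)^[p-k] x) = x := by
        rw [← Function.iterate_add_apply]
        rw [show k + (p - k) = p by omega]
        exact hfix
      calc (⇑f.symm)^[k] x = (⇑f.symm)^[k] ((⇑f)^[k] ((⇑f)^[p-k] x)) := by rw [h1]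
        _ = (⇑f)^[p-k] x := (hLI.iterate k) _
    have hsymfix : (⇑f.symm)^[p] x = x := by
      rw [hsymk p le_rfl]
      simp
    have hsymmin : ∀ k : ℕ, 0 < k → k < p → (⇑f.symm)^[k] x ≠ x := by
      intro k hk hkp hcon
      have h1 : (⇑f)^[k] ((⇑f.symm)^[k] x) = x := (hRI.iterate k) x
      rw [hcon] at h1
      exact hmin k hk hkp h1
    have hsum : (∑ i ∈ Finset.range p, E2 ((⇑f.symm)^[i] x))
        = - (∑ i ∈ Finset.range p, E1 ((⇑f)^[i] x)) := by
      have h1 : ∀ i, i < p → E2 ((⇑f.symm)^[i] x) = - E1 ((⇑f)^[p-1-i] x) := by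
        intro i hi
        rw [hflip ((⇑f.symm)^[i] x)]
        congr 1
        have h2 : f.symm ((⇑f.symm)^[i] x) = (⇑f.symm)^[i+1] x := by
          rw [Function.iterate_succ_apply']
        rw [h2, hsymk (i+1) (by omega), show p - (i+1) = p - 1 - i from by omega]
      rw [Finset.sum_congr rfl (fun i hi => h1 i (Finset.mem_range.1 hi))]
      rw [Finset.sum_neg_distrib]
      congr 1
      exact Finset.sum_range_reflect (fun j => E1 ((⇑f)^[j] x)) p
    have hKneg : (∑ i ∈ Finset.range p, E2 ((⇑f.symm)^[i] x)) ≤ 0 := by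
      rw [hsum]; omega
    exact le_trans (hkey2 x p hp hsymfix hsymmin hKneg) (by omega)

end BrinV

/-- (Brin) For every element `f` of Thompson's group `V` there is a positive integer
`N = n(f)` bounding the size of all finite orbits of `f`: for every `x ∈ [0,1)`, if
the forward orbit `{f^[n] x : n ≥ 0}` is finite then it has at most `N` elements;
equivalently, every periodic point of `f` has least period at most `N`. -/
theorem thompsonV_finite_orbits_bounded :
    ∀ f : Equiv.Perm (Ico (0:ℝ) 1), InThompsonV f →
      ∃ N : ℕ, 0 < N ∧
        (∀ x : Ico (0:ℝ) 1, (Set.range fun n : ℕ => (⇑f)^[n] x).Finite →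
          (Set.range fun n : ℕ => (⇑f)^[n] x).ncard ≤ N) ∧
        (∀ x : Ico (0:ℝ) 1, ∀ m : ℕ, 0 < m → (⇑f)^[m] x = x →
          (∀ k : ℕ, 0 < k → k < m → (⇑f)^[k] x ≠ x) → m ≤ N) := by
  intro f hf
  obtain ⟨N, hN, hb⟩ := BrinV.period_bound hf
  refine ⟨N, hN, ?_, ?_⟩
  · intro x hfin
    -- extract a least period from the finite orbit
    have hex : ∃ k, 0 < k ∧ (⇑f)^[k] x = x := by
      by_contra hcon
      push_neg at hcon
      have haux : ∀ i j : ℕ, i < j → (⇑f)^[i] x = (⇑f)^[j] x → False := by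
        intro i j hij hcon2
        have h1 : (⇑f)^[i] ((⇑f)^[j-i] x) = (⇑f)^[i] x := by
          rw [← Function.iterate_add_apply, show i + (j - i) = j by omega]
          exact hcon2.symm
        have h2 : (⇑f)^[j-i] x = x := (Function.Injective.iterate f.injective i) h1
        exact hcon (j - i) (by omega) h2
      have hinj : Function.Injective (fun n : ℕ => (⇑f)^[n] x) := by
        intro i j hij
        by_contra hne
        rcases Nat.lt_or_ge i j with h | h
        · exact haux i j h hij
        · exact haux j i (by omega) hij.symm
      exact (Set.infinite_range_of_injective hinj) hfin
    set p := Nat.find hex with hpdef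
    have hps := Nat.find_spec hex
    have hmin : ∀ k, 0 < k → k < p → (⇑f)^[k] x ≠ x := by
      intro k hk hkp hcon
      exact Nat.find_min hex hkp ⟨hk, hcon⟩
    have hple : p ≤ N := hb x p hps.1 hps.2 hmin
    have hsub : (Set.range fun n : ℕ => (⇑f)^[n] x)
        ⊆ ↑((Finset.range p).image (fun n => (⇑f)^[n] x)) := by
      rintro y ⟨n, rfl⟩
      simp only [Finset.coe_image, Set.mem_image, Finset.mem_coe, Finset.mem_range]
      refine ⟨n % p, Nat.mod_lt _ hps.1, ?_⟩
      have hdm : n % p + p * (n / p) = n := Nat.mod_add_div n p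
      have hper : (⇑f)^[p * (n/p)] x = x := by
        rw [Function.iterate_mul]
        exact Function.iterate_fixed hps.2 _
      calc (⇑f)^[n%p] x = (⇑f)^[n%p] ((⇑f)^[p*(n/p)] x) := by rw [hper]
        _ = (⇑f)^[n] x := by rw [← Function.iterate_add_apply, hdm]
    have h1 := Set.ncard_le_ncard hsub (Finset.finite_toSet _)
    rw [Set.ncard_coe_finset] at h1
    calc (Set.range fun n : ℕ => (⇑f)^[n] x).ncard
        ≤ ((Finset.range p).image (fun n => (⇑f)^[n] x)).card := h1
      _ ≤ (Finset.range p).card := Finset.card_image_le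
      _ = p := Finset.card_range p
      _ ≤ N := hple
  · intro x p hp hfix hmin
    exact hb x p hp hfix hmin

end BrinProof
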